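/- Let G be a finite simple graph with at least one edge, no isolated vertices, minimum degree δ and maximum degree Δ, and let α > 0 be real. Then equality SDD_α(G) = Δ^{-2α} M1^{2α+1}(G) holds if and only if G is regular, and equality SDD_α(G) = δ^{-2α} M1^{2α+1}(G) holds if and only if G is regular. -/

import Mathlib

open Real Finset

noncomputable def SDD {V : Type*} [Fintype V] (G : SimpleGraph V) [DecidableRel G.Adj]
    (α : ℝ) : ℝ :=
  ∑ e ∈ G.edgeFinset, Sym2.lift
    ⟨fun u v => (G.degree u : ℝ) ^ α / (G.degree v : ℝ) ^ α +
                (G.degree v : ℝ) ^ α / (G.degree u : ℝ) ^ α,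
     fun u v => by ring⟩ e

noncomputable def M1 {V : Type*} [Fintype V] (G : SimpleGraph V) [DecidableRel G.Adj]
    (α : ℝ) : ℝ :=
  ∑ u : V, (G.degree u : ℝ) ^ α

/-- Weighted handshake lemma. -/
lemma edge_sum_lift {V : Type*} [Fintype V] (G : SimpleGraph V) [DecidableRel G.Adj]
    (f : V → ℝ) :
    ∑ e ∈ G.edgeFinset, Sym2.lift ⟨fun u v => f u + f v, fun u v => by ring⟩ e
      = ∑ u : V, (G.degree u : ℝ) * f u := by
  classical
  have h1 : ∑ d : G.Dart, f d.fst = ∑ u : V, (G.degree u : ℝ) * f u := by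
    rw [← Finset.sum_fiberwise_of_maps_to
      (fun (d : G.Dart) _ => Finset.mem_univ d.fst) (fun d => f d.fst)]
    refine Finset.sum_congr rfl fun u _ => ?_
    have : ∀ d ∈ Finset.univ.filter (fun d : G.Dart => d.fst = u),
        f d.fst = f u := by
      intro d hd
      rw [Finset.mem_filter] at hd
      rw [hd.2]
    rw [Finset.sum_congr rfl this, Finset.sum_const]
    have hcard : (Finset.univ.filter (fun d : G.Dart => d.fst = u)).card
        = G.degree u := G.dart_fst_fiber_card_eq_degree u
    rw [hcard, nsmul_eq_mul]
  have h2 : ∑ d : G.Dart, f d.fst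
      = ∑ e ∈ G.edgeFinset, Sym2.lift ⟨fun u v => f u + f v, fun u v => by ring⟩ e := by
    rw [← Finset.sum_fiberwise_of_maps_to
      (fun (d : G.Dart) _ => SimpleGraph.mem_edgeFinset.mpr d.edge_mem)
      (fun d => f d.fst)]
    refine Finset.sum_congr rfl fun e he => ?_
    rw [SimpleGraph.mem_edgeFinset] at he
    induction e with
    | _ u v =>
      let d0 : G.Dart := ⟨(u, v), he⟩
      have hfib : Finset.univ.filter (fun d : G.Dart => d.edge = s(u, v))
          = {d0, d0.symm} := by
        have := d0.edge_fiber
        convert this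
        rfl
      rw [hfib, Finset.sum_pair (Ne.symm d0.symm_ne), Sym2.lift_mk]
      rfl
  rw [← h2, h1]

lemma alg_key_max {x y M : ℝ} (hx : 0 < x) (hy : 0 < y) (hxM : x ≤ M) (hyM : y ≤ M) :
    ((M ^ 2)⁻¹ * (x ^ 2 + y ^ 2) ≤ x / y + y / x) ∧
    ((M ^ 2)⁻¹ * (x ^ 2 + y ^ 2) = x / y + y / x ↔ x = M ∧ y = M) := by
  have hM : 0 < M := hx.trans_le hxM
  have hxy : 0 < x * y := mul_pos hx hy
  have hxyM : x * y ≤ M ^ 2 := by nlinarith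
  have hr : x / y + y / x = (x * y)⁻¹ * (x ^ 2 + y ^ 2) := by
    field_simp
  have hne : x ^ 2 + y ^ 2 ≠ 0 := by positivity
  constructor
  · rw [hr]
    exact mul_le_mul_of_nonneg_right (by gcongr) (by positivity)
  · rw [hr]
    constructor
    · intro h
      have h' := mul_right_cancel₀ hne h
      have h2 : M ^ 2 = x * y := inv_inj.mp h'
      constructor
      · by_contra hxe
        have hlt : x < M := lt_of_le_of_ne hxM hxe
        nlinarith
      · by_contra hye
        have hlt : y < M := lt_of_le_of_ne hyM hye
        nlinarith
    · rintro ⟨rfl, rfl⟩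
      field_simp

lemma alg_key_min {x y m : ℝ} (hx : 0 < x) (hy : 0 < y) (hmx : m ≤ x) (hmy : m ≤ y)
    (hm : 0 < m) :
    (x / y + y / x ≤ (m ^ 2)⁻¹ * (x ^ 2 + y ^ 2)) ∧
    (x / y + y / x = (m ^ 2)⁻¹ * (x ^ 2 + y ^ 2) ↔ x = m ∧ y = m) := by
  have hxy : 0 < x * y := mul_pos hx hy
  have hxym : m ^ 2 ≤ x * y := by nlinarith
  have hr : x / y + y / x = (x * y)⁻¹ * (x ^ 2 + y ^ 2) := by
    field_simp
  have hne : x ^ 2 + y ^ 2 ≠ 0 := by positivity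
  constructor
  · rw [hr]
    exact mul_le_mul_of_nonneg_right (by gcongr) (by positivity)
  · rw [hr]
    constructor
    · intro h
      have h' := mul_right_cancel₀ hne h
      have h2 : x * y = m ^ 2 := inv_inj.mp h'
      constructor
      · by_contra hxe
        have hlt : m < x := lt_of_le_of_ne hmx (Ne.symm hxe)
        nlinarith
      · by_contra hye
        have hlt : m < y := lt_of_le_of_ne hmy (Ne.symm hye)
        nlinarith
    · rintro ⟨rfl, rfl⟩
      field_simp

theorem sdd_m1_eq_iff_regular {V : Type*} [Fintype V] (G : SimpleGraph V)
    [DecidableRel G.Adj] (he : G.edgeFinset.Nonempty) (hδ : 1 ≤ G.minDegree)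
    {α : ℝ} (hα : 0 < α) :
    (SDD G α = (G.maxDegree : ℝ) ^ (-(2 * α)) * M1 G (2 * α + 1) ↔
      ∃ k, G.IsRegularOfDegree k) ∧
    (SDD G α = (G.minDegree : ℝ) ^ (-(2 * α)) * M1 G (2 * α + 1) ↔
      ∃ k, G.IsRegularOfDegree k) := by
  classical
  -- degrees are positive
  have hdeg1 : ∀ u : V, 1 ≤ G.degree u := fun u => hδ.trans (G.minDegree_le_degree u)
  have hdegpos : ∀ u : V, (0 : ℝ) < (G.degree u : ℝ) := fun u => by
    exact_mod_cast Nat.lt_of_lt_of_le Nat.zero_lt_one (hdeg1 u)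
  -- get a vertex
  obtain ⟨e0, he0⟩ := he
  rw [SimpleGraph.mem_edgeFinset] at he0
  obtain ⟨u0, v0⟩ := e0
  have hne : Nonempty V := ⟨u0⟩
  have hΔ1 : 1 ≤ G.maxDegree := (hdeg1 u0).trans (G.degree_le_maxDegree u0)
  have hΔpos : (0 : ℝ) < (G.maxDegree : ℝ) := by exact_mod_cast hΔ1
  have hδpos : (0 : ℝ) < (G.minDegree : ℝ) := by exact_mod_cast hδ
  -- rpow facts
  have hpow2 : ∀ a : ℝ, 0 < a → a ^ (2 * α) = (a ^ α) ^ 2 := fun a ha => by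
    rw [show (2 * α) = α * 2 by ring, Real.rpow_mul ha.le,
      show ((2 : ℝ)) = ((2 : ℕ) : ℝ) by norm_num, Real.rpow_natCast]
  have hpowneg : ∀ a : ℝ, 0 < a → a ^ (-(2 * α)) = ((a ^ α) ^ 2)⁻¹ := fun a ha => by
    rw [Real.rpow_neg ha.le, hpow2 a ha]
  have hxpos : ∀ u : V, 0 < (G.degree u : ℝ) ^ α := fun u => Real.rpow_pos_of_pos (hdegpos u) _
  -- rewriting of M1-side as a sum over edges
  have hM1 : ∀ c : ℝ, 0 < c →
      (c : ℝ) ^ (-(2 * α)) * M1 G (2 * α + 1)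
        = ∑ e ∈ G.edgeFinset,
            Sym2.lift ⟨fun u v => ((c ^ α) ^ 2)⁻¹ * (((G.degree u : ℝ) ^ α) ^ 2 + ((G.degree v : ℝ) ^ α) ^ 2),
              fun u v => by ring⟩ e := by
    intro c hc
    have hM1' : M1 G (2 * α + 1) = ∑ u : V, (G.degree u : ℝ) * (((G.degree u : ℝ) ^ α) ^ 2) := by
      unfold M1
      refine Finset.sum_congr rfl fun u _ => ?_
      rw [Real.rpow_add (hdegpos u), Real.rpow_one, hpow2 _ (hdegpos u)]
      ring
    rw [hM1', ← edge_sum_lift G (fun u => ((G.degree u : ℝ) ^ α) ^ 2), Finset.mul_sum,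
      hpowneg c hc]
    refine Finset.sum_congr rfl fun e _ => ?_
    induction e with
    | _ u v => rw [Sym2.lift_mk, Sym2.lift_mk]
  -- characterization of regularity
  have hchar : ∀ m : ℕ, (∀ u v : V, G.Adj u v → G.degree u = m) →
      ∃ k, G.IsRegularOfDegree k := by
    intro m h
    refine ⟨m, fun u => ?_⟩
    have hpos : 0 < G.degree u := Nat.lt_of_lt_of_le Nat.zero_lt_one (hdeg1 u)
    obtain ⟨v, hv⟩ := (G.degree_pos_iff_exists_adj u).mp hpos
    exact h u v hv
  -- if regular then min and max degree equal k
  have hregmax : ∀ k, G.IsRegularOfDegree k → G.maxDegree = k := by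
    intro k hk
    exact le_antisymm (G.maxDegree_le_of_forall_degree_le k fun v => (hk v).le)
      ((hk u0) ▸ G.degree_le_maxDegree u0)
  have hregmin : ∀ k, G.IsRegularOfDegree k → G.minDegree = k := by
    intro k hk
    exact le_antisymm ((hk u0) ▸ G.minDegree_le_degree u0)
      (G.le_minDegree_of_forall_le_degree k fun v => (hk v).ge)
  constructor
  -- max degree case
  · rw [hM1 _ hΔpos]
    unfold SDD
    rw [eq_comm, Finset.sum_eq_sum_iff_of_le]
    swap
    · intro e hee
      rw [SimpleGraph.mem_edgeFinset] at hee
      induction e with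
      | _ u v =>
        rw [Sym2.lift_mk, Sym2.lift_mk]
        exact (alg_key_max (hxpos u) (hxpos v)
          (Real.rpow_le_rpow (hdegpos u).le
            (by exact_mod_cast G.degree_le_maxDegree u) hα.le)
          (Real.rpow_le_rpow (hdegpos v).le
            (by exact_mod_cast G.degree_le_maxDegree v) hα.le)).1
    · constructor
      · intro h
        refine hchar G.maxDegree fun u v huv => ?_
        have hm : s(u, v) ∈ G.edgeFinset := by
          rw [SimpleGraph.mem_edgeFinset]; exact huv
        have := h _ hm
        rw [Sym2.lift_mk, Sym2.lift_mk] at this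
        have heq := ((alg_key_max (hxpos u) (hxpos v)
          (Real.rpow_le_rpow (hdegpos u).le
            (by exact_mod_cast G.degree_le_maxDegree u) hα.le)
          (Real.rpow_le_rpow (hdegpos v).le
            (by exact_mod_cast G.degree_le_maxDegree v) hα.le)).2).mp this
        have hDu : (G.degree u : ℝ) = (G.maxDegree : ℝ) := by
          by_contra hDne
          have hlt : (G.degree u : ℝ) < (G.maxDegree : ℝ) := lt_of_le_of_ne
            (by exact_mod_cast G.degree_le_maxDegree u) hDne
          exact absurd heq.1 (ne_of_lt (Real.rpow_lt_rpow (hdegpos u).le hlt hα))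
        exact_mod_cast hDu
      · rintro ⟨k, hk⟩
        intro e hee
        rw [SimpleGraph.mem_edgeFinset] at hee
        induction e with
        | _ u v =>
          rw [Sym2.lift_mk, Sym2.lift_mk]
          refine ((alg_key_max (hxpos u) (hxpos v)
            (Real.rpow_le_rpow (hdegpos u).le
              (by exact_mod_cast G.degree_le_maxDegree u) hα.le)
            (Real.rpow_le_rpow (hdegpos v).le
              (by exact_mod_cast G.degree_le_maxDegree v) hα.le)).2).mpr ?_
          have h1 : (G.degree u : ℝ) = (G.maxDegree : ℝ) := by
            rw [hregmax k hk]; exact_mod_cast hk u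
          have h2 : (G.degree v : ℝ) = (G.maxDegree : ℝ) := by
            rw [hregmax k hk]; exact_mod_cast hk v
          rw [h1, h2]
          exact ⟨rfl, rfl⟩
  -- min degree case
  · rw [hM1 _ hδpos]
    unfold SDD
    rw [Finset.sum_eq_sum_iff_of_le]
    swap
    · intro e hee
      rw [SimpleGraph.mem_edgeFinset] at hee
      induction e with
      | _ u v =>
        rw [Sym2.lift_mk, Sym2.lift_mk]
        exact (alg_key_min (hxpos u) (hxpos v)
          (Real.rpow_le_rpow hδpos.le
            (by exact_mod_cast G.minDegree_le_degree u) hα.le)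
          (Real.rpow_le_rpow hδpos.le
            (by exact_mod_cast G.minDegree_le_degree v) hα.le)
          (Real.rpow_pos_of_pos hδpos _)).1
    · constructor
      · intro h
        refine hchar G.minDegree fun u v huv => ?_
        have hm : s(u, v) ∈ G.edgeFinset := by
          rw [SimpleGraph.mem_edgeFinset]; exact huv
        have := h _ hm
        rw [Sym2.lift_mk, Sym2.lift_mk] at this
        have heq := ((alg_key_min (hxpos u) (hxpos v)
          (Real.rpow_le_rpow hδpos.le
            (by exact_mod_cast G.minDegree_le_degree u) hα.le)
          (Real.rpow_le_rpow hδpos.le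
            (by exact_mod_cast G.minDegree_le_degree v) hα.le)
          (Real.rpow_pos_of_pos hδpos _)).2).mp this
        have hDu : (G.degree u : ℝ) = (G.minDegree : ℝ) := by
          by_contra hDne
          have hlt : (G.minDegree : ℝ) < (G.degree u : ℝ) := lt_of_le_of_ne
            (by exact_mod_cast G.minDegree_le_degree u) (Ne.symm hDne)
          exact absurd heq.1 (ne_of_gt (Real.rpow_lt_rpow hδpos.le hlt hα))
        exact_mod_cast hDu
      · rintro ⟨k, hk⟩
        intro e hee
        rw [SimpleGraph.mem_edgeFinset] at hee
        induction e with
        | _ u v =>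
          rw [Sym2.lift_mk, Sym2.lift_mk]
          refine ((alg_key_min (hxpos u) (hxpos v)
            (Real.rpow_le_rpow hδpos.le
              (by exact_mod_cast G.minDegree_le_degree u) hα.le)
            (Real.rpow_le_rpow hδpos.le
              (by exact_mod_cast G.minDegree_le_degree v) hα.le)
            (Real.rpow_pos_of_pos hδpos _)).2).mpr ?_
          have h1 : (G.degree u : ℝ) = (G.minDegree : ℝ) := by
            rw [hregmin k hk]; exact_mod_cast hk u
          have h2 : (G.degree v : ℝ) = (G.minDegree : ℝ) := by
            rw [hregmin k hk]; exact_mod_cast hk v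
          rw [h1, h2]
          exact ⟨rfl, rfl⟩
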